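/- For fixed ε > 0 and threshold width, the power function β(w) = Φ̄(z_{αw/m} − ε) is strictly increasing and concave in w on (0, m/α) whenever z_{αw/m} > ε. Specifically, β'(w) = (α/m)·exp(ε·z_{αw/m} − ε²/2) > 0, and β''(w) < 0 when z_{αw/m} > ε. -/

import Mathlib

open MeasureTheory ProbabilityTheory Set

/-- The standard normal CDF. -/
noncomputable def Phi (x : ℝ) : ℝ := ((gaussianReal 0 1) (Set.Iic x)).toReal

lemma Phi_eq (x : ℝ) : Phi x = ∫ t in Iic x, gaussianPDFReal 0 1 t := by
  rw [Phi, gaussianReal_apply_eq_integral 0 (by norm_num) (Iic x), ENNReal.toReal_ofReal]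
  exact setIntegral_nonneg measurableSet_Iic fun t _ => gaussianPDFReal_nonneg 0 1 t

lemma continuous_pdf : Continuous (gaussianPDFReal 0 1) := by
  rw [gaussianPDFReal_def]; fun_prop

lemma pdf_pos (x : ℝ) : 0 < gaussianPDFReal 0 1 x :=
  gaussianPDFReal_pos 0 1 x (by norm_num)

lemma hasStrictDerivAt_Phi (x : ℝ) : HasStrictDerivAt Phi (gaussianPDFReal 0 1 x) x := by
  have h : Phi = fun x => (∫ t in Iic (0:ℝ), gaussianPDFReal 0 1 t) +
      ∫ t in (0:ℝ)..x, gaussianPDFReal 0 1 t := by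
    funext x
    rw [Phi_eq, ← intervalIntegral.integral_Iic_sub_Iic ((integrable_gaussianPDFReal 0 1).integrableOn)
      ((integrable_gaussianPDFReal 0 1).integrableOn)]
    ring
  rw [h]
  exact (continuous_pdf.integral_hasStrictDerivAt 0 x).const_add _

lemma Phi_strictMono : StrictMono Phi :=
  strictMono_of_deriv_pos fun x => by
    rw [(hasStrictDerivAt_Phi x).hasDerivAt.deriv]; exact pdf_pos x

lemma pdf_ratio (z e : ℝ) :
    gaussianPDFReal 0 1 (z - e) = gaussianPDFReal 0 1 z * Real.exp (e * z - e ^ 2 / 2) := by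
  simp only [gaussianPDFReal, NNReal.coe_one]
  have h : Real.exp (-(z - e - 0) ^ 2 / (2 * (1:ℝ))) =
      Real.exp (-(z - 0) ^ 2 / (2 * (1:ℝ))) * Real.exp (e * z - e ^ 2 / 2) := by
    rw [← Real.exp_add]; congr 1; ring
  rw [h]; ring

/-- The power `β(w) = Φ̄(z_{αw/m} − ε)` is strictly increasing on `(0, m/α)` with
derivative `β'(w) = (α/m) exp(ε z_{αw/m} − ε²/2) > 0`, and `β''(w) < 0` whenever
`z_{αw/m} > ε`. -/
theorem power_increasing_concave
    (ε : ℝ) (hε : 0 < ε) (α : ℝ) (hα : α ∈ Set.Ioo (0 : ℝ) 1)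
    (m : ℕ) (hm : 1 ≤ m)
    (zfun : ℝ → ℝ)
    (hz : ∀ w ∈ Ioo (0 : ℝ) (m / α), 1 - Phi (zfun w) = α * w / m)
    (β : ℝ → ℝ) (hβ : ∀ w, β w = 1 - Phi (zfun w - ε)) :
    StrictMonoOn β (Ioo (0 : ℝ) (m / α)) ∧
    (∀ w ∈ Ioo (0 : ℝ) (m / α),
      HasDerivAt β ((α / m) * Real.exp (ε * zfun w - ε ^ 2 / 2)) w ∧
      0 < (α / m) * Real.exp (ε * zfun w - ε ^ 2 / 2)) ∧
    (∀ w ∈ Ioo (0 : ℝ) (m / α), ε < zfun w → deriv (deriv β) w < 0) := by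
  obtain ⟨hα0, hα1⟩ := hα
  have hm0 : (0:ℝ) < m := by exact_mod_cast hm
  have hd0 : 0 < α / m := div_pos hα0 hm0
  -- derivative of zfun
  have key : ∀ w ∈ Ioo (0:ℝ) ((m:ℝ) / α),
      HasDerivAt zfun (-(α / m) * (gaussianPDFReal 0 1 (zfun w))⁻¹) w := by
    intro w hw
    have hPhiz : Phi (zfun w) = 1 - α * w / m := by linarith [hz w hw]
    have hSD := hasStrictDerivAt_Phi (zfun w)
    have hne : gaussianPDFReal 0 1 (zfun w) ≠ 0 := (pdf_pos _).ne'
    set g := hSD.localInverse Phi _ (zfun w) hne with hg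
    have hgd : HasStrictDerivAt g (gaussianPDFReal 0 1 (zfun w))⁻¹ (Phi (zfun w)) :=
      hSD.to_localInverse hne
    have haff : HasDerivAt (fun w' : ℝ => 1 - α * w' / m) (-(α / m)) w := by
      have h := (((hasDerivAt_id w).const_mul α).div_const (m:ℝ)).const_sub 1
      simp only [id_eq] at h
      exact h.congr_deriv (by ring)
    have hcomp : HasDerivAt (fun w' : ℝ => g (1 - α * w' / m))
        ((gaussianPDFReal 0 1 (zfun w))⁻¹ * (-(α / m))) w := by
      rw [hPhiz] at hgd
      exact (hgd.hasDerivAt).comp w haff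
    have hri : ∀ᶠ y in nhds (Phi (zfun w)), Phi (g y) = y :=
      (hSD.hasStrictFDerivAt_equiv hne).eventually_right_inverse
    have htend : Filter.Tendsto (fun w' : ℝ => 1 - α * w' / m) (nhds w) (nhds (Phi (zfun w))) := by
      rw [hPhiz]; exact haff.continuousAt.tendsto
    have h2 : ∀ᶠ w' in nhds w, Phi (g (1 - α * w' / m)) = 1 - α * w' / m := htend.eventually hri
    have h1 : ∀ᶠ w' in nhds w, w' ∈ Ioo (0:ℝ) ((m:ℝ) / α) :=
      Filter.eventually_of_mem (isOpen_Ioo.mem_nhds hw) fun _ h => h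
    have heq : zfun =ᶠ[nhds w] fun w' => g (1 - α * w' / m) := by
      filter_upwards [h1, h2] with w' hw' hr
      refine Phi_strictMono.injective ?_
      rw [hr]; linarith [hz w' hw']
    have := hcomp.congr_of_eventuallyEq heq
    exact this.congr_deriv (by ring)
  -- derivative of β
  have hβd : ∀ w ∈ Ioo (0:ℝ) ((m:ℝ) / α),
      HasDerivAt β ((α / m) * Real.exp (ε * zfun w - ε ^ 2 / 2)) w := by
    intro w hw
    have hzd := key w hw
    have h1 : HasDerivAt (fun w' => zfun w' - ε)
        (-(α / m) * (gaussianPDFReal 0 1 (zfun w))⁻¹) w := hzd.sub_const ε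
    have h2 : HasDerivAt (fun w' => Phi (zfun w' - ε))
        (gaussianPDFReal 0 1 (zfun w - ε) * (-(α / m) * (gaussianPDFReal 0 1 (zfun w))⁻¹)) w :=
      by have := (hasStrictDerivAt_Phi (zfun w - ε)).hasDerivAt.comp w h1; exact this
    have h3 : HasDerivAt β
        (-(gaussianPDFReal 0 1 (zfun w - ε) * (-(α / m) * (gaussianPDFReal 0 1 (zfun w))⁻¹))) w := by
      have hfe : β = fun w' => 1 - Phi (zfun w' - ε) := funext hβ
      rw [hfe]; exact h2.const_sub 1
    convert h3 using 1
    rw [pdf_ratio]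
    have hne : gaussianPDFReal 0 1 (zfun w) ≠ 0 := (pdf_pos _).ne'
    field_simp
  refine ⟨?_, fun w hw => ⟨hβd w hw, by positivity⟩, ?_⟩
  · refine strictMonoOn_of_deriv_pos (convex_Ioo _ _)
      (fun x hx => (hβd x hx).continuousAt.continuousWithinAt) ?_
    intro x hx
    rw [interior_Ioo] at hx
    rw [(hβd x hx).deriv]
    positivity
  · intro w hw _
    have h1 : deriv β =ᶠ[nhds w] fun w' => (α / m) * Real.exp (ε * zfun w' - ε ^ 2 / 2) := by
      filter_upwards [Filter.eventually_of_mem (isOpen_Ioo.mem_nhds hw) fun _ h => h] with w' hw'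
      exact (hβd w' hw').deriv
    have harg : HasDerivAt (fun w' => ε * zfun w' - ε ^ 2 / 2)
        (ε * (-(α / m) * (gaussianPDFReal 0 1 (zfun w))⁻¹)) w :=
      ((key w hw).const_mul ε).sub_const _
    have h2 : HasDerivAt (fun w' => (α / m) * Real.exp (ε * zfun w' - ε ^ 2 / 2))
        (-((α / m) * Real.exp (ε * zfun w - ε ^ 2 / 2) *
          (ε * ((α / m) * (gaussianPDFReal 0 1 (zfun w))⁻¹)))) w := by
      have := (harg.exp).const_mul (α / m)
      exact this.congr_deriv (by ring)
    have h3 := h2.congr_of_eventuallyEq h1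
    rw [h3.deriv]
    have hpos : 0 < (α / m) * Real.exp (ε * zfun w - ε ^ 2 / 2) *
        (ε * ((α / m) * (gaussianPDFReal 0 1 (zfun w))⁻¹)) := by
      have := pdf_pos (zfun w)
      positivity
    linarith
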